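/- Let E_j = Σ_{i_1+⋯+i_n=j} |i_1⟩⋯|i_n⟩ be the n-qudit excitation states for 0 ≤ j ≤ d−1, and let K be the nilpotent Jordan block of size d. For any coefficients α_0,…,α_{d−1} with α_{d−1} ≠ 0, the single-particle operator T = Σ_{j=0}^{d−1} α_{d−1−j} K^j is invertible (its determinant equals α_{d−1}^d) and T_{(1)} E_{d−1} = Σ_{j=0}^{d−1} α_j E_j. -/

import Mathlib

open Matrix BigOperators Polynomial

/-- Permutation symmetry of an `n`-qudit state represented by its amplitudes. -/
def PSym {n d : ℕ} (ψ : (Fin n → Fin d) → ℂ) : Prop :=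
  ∀ σ : Equiv.Perm (Fin n), ∀ x : Fin n → Fin d, ψ (x ∘ σ) = ψ x

/-- The operator `B` acting on the `k`-th tensor factor (identity elsewhere). -/
noncomputable def appAt {n d : ℕ} (k : Fin n) (B : Matrix (Fin d) (Fin d) ℂ)
    (ψ : (Fin n → Fin d) → ℂ) : (Fin n → Fin d) → ℂ :=
  fun x => ∑ j : Fin d, B (x k) j * ψ (Function.update x k j)

/-- The operator `A 1 ⊗ A 2 ⊗ ⋯ ⊗ A n` acting on an `n`-qudit state. -/
noncomputable def appAll {n d : ℕ} (A : Fin n → Matrix (Fin d) (Fin d) ℂ)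
    (ψ : (Fin n → Fin d) → ℂ) : (Fin n → Fin d) → ℂ :=
  fun x => ∑ y : Fin n → Fin d, (∏ k, A k (x k) (y k)) * ψ y

/-- The nilpotent Jordan block `K = Σ_{i=1}^{d-1} |i-1⟩⟨i|`. -/
noncomputable def Kblock (d : ℕ) : Matrix (Fin d) (Fin d) ℂ :=
  Matrix.of fun a b => if (a : ℕ) + 1 = (b : ℕ) then 1 else 0

/-- The unnormalized excitation state `E_j = Σ_{i_1+⋯+i_n=j} |i_1⟩⋯|i_n⟩`. -/
noncomputable def Estate (n d : ℕ) (j : ℕ) : (Fin n → Fin d) → ℂ :=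
  fun x => if (∑ k, (x k : ℕ)) = j then 1 else 0

lemma Kpow (d j : ℕ) : (Kblock d) ^ j =
    Matrix.of fun a b : Fin d => if (a : ℕ) + j = (b : ℕ) then (1:ℂ) else 0 := by
  induction j with
  | zero =>
    ext a b
    simp [Matrix.one_apply, Fin.ext_iff, eq_comm]
  | succ j ih =>
    ext a b
    rw [pow_succ, ih]
    simp only [Matrix.mul_apply, Matrix.of_apply, Kblock]
    by_cases h : (a : ℕ) + j < d
    · rw [Finset.sum_eq_single (⟨(a : ℕ) + j, h⟩ : Fin d)]
      · simp [add_assoc]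
      · intro c _ hc
        rw [if_neg, zero_mul]
        intro hcc
        exact hc (Fin.ext hcc.symm)
      · simp
    · rw [Finset.sum_eq_zero, eq_comm, if_neg (by omega)]
      intro c _
      rw [if_neg (by have := c.isLt; omega), zero_mul]

lemma Tapply {d : ℕ} (α : Fin d → ℂ) (a b : Fin d) :
    (∑ j : Fin d, α j.rev • (Kblock d) ^ (j : ℕ)) a b =
      if h : (a : ℕ) ≤ b then α ⟨d - 1 - ((b : ℕ) - a), by have := b.isLt; omega⟩
      else 0 := by
  simp only [Matrix.sum_apply, Matrix.smul_apply, Kpow, Matrix.of_apply, smul_eq_mul]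
  by_cases h : (a : ℕ) ≤ b
  · rw [dif_pos h,
      Finset.sum_eq_single (⟨(b : ℕ) - a, by have := b.isLt; omega⟩ : Fin d)]
    · rw [if_pos (by simp; omega), mul_one]
      congr 1
      ext
      simp only [Fin.val_rev]
      omega
    · intro c _ hc
      rw [if_neg, mul_zero]
      intro hcc
      exact hc (Fin.ext (by simp; omega))
    · simp
  · rw [dif_neg h, Finset.sum_eq_zero]
    intro j _
    rw [if_neg (by omega), mul_zero]

set_option maxHeartbeats 1000000 in
theorem stmt_15' {n d : ℕ} (hn : 0 < n) (hd : 0 < d) (α : Fin d → ℂ)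
    (hα : α ⟨d - 1, Nat.sub_lt hd one_pos⟩ ≠ 0) :
    (∑ j : Fin d, α j.rev • (Kblock d) ^ (j : ℕ)).det =
        (α ⟨d - 1, Nat.sub_lt hd one_pos⟩) ^ d ∧
      IsUnit (∑ j : Fin d, α j.rev • (Kblock d) ^ (j : ℕ)).det ∧
      (fun x : Fin n → Fin d => ∑ b : Fin d,
          (∑ j : Fin d, α j.rev • (Kblock d) ^ (j : ℕ)) (x ⟨0, hn⟩) b *
            (if (∑ k, ((Function.update x ⟨0, hn⟩ b k : Fin d) : ℕ)) = d - 1 then (1:ℂ) else 0)) =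
        fun x : Fin n → Fin d => ∑ j : Fin d, α j * (if (∑ k, ((x k : Fin d) : ℕ)) = (j:ℕ) then (1:ℂ) else 0) := by
  have htri : (∑ j : Fin d, α j.rev • (Kblock d) ^ (j : ℕ)).BlockTriangular id := by
    intro i j hij
    have hij' : (j : ℕ) < (i : ℕ) := hij
    rw [Tapply, dif_neg (by omega)]
  have hdet : (∑ j : Fin d, α j.rev • (Kblock d) ^ (j : ℕ)).det =
      (α ⟨d - 1, Nat.sub_lt hd one_pos⟩) ^ d := by
    rw [Matrix.det_of_upperTriangular htri]
    have : ∀ a : Fin d, (∑ j : Fin d, α j.rev • (Kblock d) ^ (j : ℕ)) a a =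
        α ⟨d - 1, Nat.sub_lt hd one_pos⟩ := by
      intro a
      rw [Tapply, dif_pos le_rfl]
      congr 1
      ext
      simp only [Fin.val_mk]
      omega
    simp [this]
  refine ⟨hdet, hdet ▸ isUnit_iff_ne_zero.mpr (pow_ne_zero d hα), ?_⟩
  funext x
  set r := ∑ k ∈ Finset.univ.erase (⟨0, hn⟩ : Fin n), ((x k : Fin d) : ℕ) with hr
  have hupd : ∀ b : Fin d,
      (∑ k, ((Function.update x ⟨0, hn⟩ b k : Fin d) : ℕ)) = (b : ℕ) + r := by
    intro b
    rw [← Finset.add_sum_erase _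
      (fun k => ((Function.update x ⟨0, hn⟩ b k : Fin d) : ℕ))
      (Finset.mem_univ (⟨0, hn⟩ : Fin n)), Function.update_self]
    congr 1
    exact Finset.sum_congr rfl fun k hk => by
      rw [Function.update_of_ne (Finset.ne_of_mem_erase hk)]
  have hsum : (∑ k, ((x k : Fin d) : ℕ)) = ((x ⟨0, hn⟩ : Fin d) : ℕ) + r :=
    (Finset.add_sum_erase _ _ (Finset.mem_univ _)).symm
  simp only [Tapply, hupd, hsum]
  set a := ((x ⟨0, hn⟩ : Fin d) : ℕ) with ha
  have had : a < d := (x ⟨0, hn⟩).isLt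
  by_cases h : a + r ≤ d - 1
  · rw [Finset.sum_eq_single (⟨d - 1 - r, by omega⟩ : Fin d),
      Finset.sum_eq_single (⟨a + r, by omega⟩ : Fin d)]
    · simp only [Fin.val_mk]
      rw [if_pos (by omega), if_pos (by omega), mul_one, mul_one,
        dif_pos (by omega)]
      congr 1
      ext
      simp only [Fin.val_mk]
      omega
    · intro c _ hc
      rw [if_neg, mul_zero]
      intro hcc
      exact hc (Fin.ext (by simp only [Fin.val_mk]; omega))
    · simp
    · intro c _ hc
      rw [if_neg, mul_zero]
      intro hcc
      exact hc (Fin.ext (by simp only [Fin.val_mk]; omega))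
    · simp
  · rw [Finset.sum_eq_zero, Finset.sum_eq_zero]
    · intro j _
      rw [if_neg (by have := j.isLt; omega), mul_zero]
    · intro b _
      by_cases hb : (b : ℕ) + r = d - 1
      · rw [dif_neg (by omega), zero_mul]
      · rw [if_neg hb, mul_zero]

theorem stmt_15 {n d : ℕ} (hn : 0 < n) (hd : 0 < d) (α : Fin d → ℂ)
    (hα : α ⟨d - 1, Nat.sub_lt hd one_pos⟩ ≠ 0) :
    (∑ j : Fin d, α j.rev • (Kblock d) ^ (j : ℕ)).det =
        (α ⟨d - 1, Nat.sub_lt hd one_pos⟩) ^ d ∧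
      IsUnit (∑ j : Fin d, α j.rev • (Kblock d) ^ (j : ℕ)).det ∧
      appAt ⟨0, hn⟩ (∑ j : Fin d, α j.rev • (Kblock d) ^ (j : ℕ))
          (Estate n d (d - 1)) =
        fun x => ∑ j : Fin d, α j * Estate n d (j : ℕ) x := by
  obtain ⟨h1, h2, h3⟩ := stmt_15' hn hd α hα
  exact ⟨h1, h2, h3⟩
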